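/- arXiv:1112.2020 — 7 statements merged into one kernel-verified Lean document; each statement's English description precedes it below -/
import Mathlib

section
/- For every real λ > 0 and all reals a, b, x, the Laplace densities centered at a and at b satisfy the pointwise ratio bound (1/(2λ))·exp(−|x−a|/λ) ≤ exp(|a−b|/λ) · (1/(2λ))·exp(−|x−b|/λ). In particular, if ε > 0, Δf > 0, λ = Δf/ε and |a−b| ≤ Δf, then (1/(2λ))·exp(−|x−a|/λ) ≤ exp(ε) · (1/(2λ))·exp(−|x−b|/λ). -/
open Real

lemma laplace_aux (lam : ℝ) (hlam : 0 < lam) (a b x : ℝ) (t : ℝ) (ht : |a - b| / lam ≤ t) :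
    (1 / (2 * lam)) * Real.exp (-|x - a| / lam)
      ≤ Real.exp t * ((1 / (2 * lam)) * Real.exp (-|x - b| / lam)) := by
  have hpos : (0:ℝ) < 1 / (2 * lam) := by positivity
  rw [mul_left_comm]
  apply mul_le_mul_of_nonneg_left _ hpos.le
  rw [← Real.exp_add]
  apply Real.exp_le_exp.2
  have htri : |x - b| ≤ |a - b| + |x - a| := by
    calc |x - b| = |(x - a) + (a - b)| := by ring_nf
    _ ≤ |x - a| + |a - b| := abs_add_le _ _
    _ = |a - b| + |x - a| := by ring
  have h1 : -|x - a| / lam ≤ |a - b| / lam + -|x - b| / lam := by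
    rw [← add_div]
    apply div_le_div_of_nonneg_right _ hlam.le
    linarith
  linarith [add_le_add_right ht (-|x - b| / lam)]
  
/-- Pointwise ratio bound between Laplace densities centered at `a` and `b`, and its
specialization λ = Δf/ε, |a − b| ≤ Δf (the density-ratio core of the Laplace mechanism). -/
theorem laplace_density_ratio (lam : ℝ) (hlam : 0 < lam) (a b x : ℝ) :
    (1 / (2 * lam)) * Real.exp (-|x - a| / lam)
      ≤ Real.exp (|a - b| / lam) * ((1 / (2 * lam)) * Real.exp (-|x - b| / lam)) ∧
    (∀ ε Δf : ℝ, 0 < ε → 0 < Δf → lam = Δf / ε → |a - b| ≤ Δf →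
      (1 / (2 * lam)) * Real.exp (-|x - a| / lam)
        ≤ Real.exp ε * ((1 / (2 * lam)) * Real.exp (-|x - b| / lam))) := by
  refine ⟨laplace_aux lam hlam a b x _ le_rfl, ?_⟩
  intro ε Δf hε hΔf hl hab
  apply laplace_aux lam hlam a b x
  rw [hl, div_div_eq_mul_div, div_le_iff₀ hΔf]
  calc |a - b| * ε ≤ Δf * ε := by nlinarith
  _ = ε * Δf := mul_comm _ _
end

section
/- Let d be a positive natural number, ε > 0, Δf > 0, and set λ = Δf/ε. For all vectors a, b, x ∈ ℝ^d with ∑_{i=1}^d |a_i − b_i| ≤ Δf, the product densities of independent Laplace(λ) noise added coordinatewise satisfy ∏_{i=1}^d (1/(2λ))·exp(−|x_i − a_i|/λ) ≤ exp(ε) · ∏_{i=1}^d (1/(2λ))·exp(−|x_i − b_i|/λ). -/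
open Real

/-- Multidimensional Laplace mechanism density bound: if ∑ᵢ |aᵢ − bᵢ| ≤ Δf and λ = Δf/ε,
then the product of the coordinatewise Laplace(λ) densities centered at `a` evaluated at `x`
is at most exp(ε) times the product of the densities centered at `b`. -/
theorem laplace_mechanism_multidim (d : ℕ) (hd : 0 < d) (ε Δf : ℝ) (hε : 0 < ε)
    (hΔf : 0 < Δf) (lam : ℝ) (hlam : lam = Δf / ε) (a b x : Fin d → ℝ)
    (hsens : ∑ i, |a i - b i| ≤ Δf) :
    ∏ i, (1 / (2 * lam)) * Real.exp (-|x i - a i| / lam)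
      ≤ Real.exp ε * ∏ i, (1 / (2 * lam)) * Real.exp (-|x i - b i| / lam) := by
  have hlam0 : 0 < lam := by rw [hlam]; positivity
  have key : ∏ i, (1 / (2 * lam)) * Real.exp (-|x i - a i| / lam)
      = (1 / (2 * lam)) ^ d * Real.exp (∑ i, -|x i - a i| / lam) := by
    rw [Finset.prod_mul_distrib, Finset.prod_const, Real.exp_sum, Finset.card_univ,
      Fintype.card_fin]
  have key' : ∏ i, (1 / (2 * lam)) * Real.exp (-|x i - b i| / lam)
      = (1 / (2 * lam)) ^ d * Real.exp (∑ i, -|x i - b i| / lam) := by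
    rw [Finset.prod_mul_distrib, Finset.prod_const, Real.exp_sum, Finset.card_univ,
      Fintype.card_fin]
  rw [key, key', mul_comm (Real.exp ε), mul_assoc, ← Real.exp_add]
  apply mul_le_mul_of_nonneg_left _ (by positivity)
  apply Real.exp_le_exp.mpr
  rw [← Finset.sum_div, ← Finset.sum_div]
  have h1 : ∑ i, -|x i - a i| ≤ ∑ i, |a i - b i| + ∑ i, -|x i - b i| := by
    rw [← Finset.sum_add_distrib]
    apply Finset.sum_le_sum
    intro i _
    have := abs_sub_abs_le_abs_sub (x i - b i) (x i - a i)
    have h2 : |(x i - b i) - (x i - a i)| = |a i - b i| := by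
      congr 1; ring
    rw [h2] at this
    linarith
  have h2 : (∑ i, |a i - b i|) / lam ≤ ε := by
    rw [div_le_iff₀ hlam0, hlam]
    calc ∑ i, |a i - b i| ≤ Δf := hsens
    _ = ε * (Δf / ε) := by field_simp
  calc (∑ i, -|x i - a i|) / lam ≤ (∑ i, |a i - b i| + ∑ i, -|x i - b i|) / lam := by
        gcongr
    _ = (∑ i, |a i - b i|) / lam + (∑ i, -|x i - b i|) / lam := add_div _ _ _
    _ ≤ (∑ i, -|x i - b i|) / lam + ε := by linarith
end

section
/- Let λ > 0 and let μ_c denote the measure on ℝ with density x ↦ (1/(2λ))·exp(−|x−c|/λ) with respect to Lebesgue measure. Then for all reals a, b and every measurable set S ⊆ ℝ, μ_a(S) ≤ exp(|a−b|/λ) · μ_b(S). -/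
open Real MeasureTheory

/-- Measure-theoretic form of the Laplace mechanism: if μ_c is the measure on ℝ with
density x ↦ (1/(2λ))·exp(−|x−c|/λ) with respect to Lebesgue measure, then for all a, b
and every measurable set S, μ_a(S) ≤ exp(|a−b|/λ) · μ_b(S). -/
theorem laplace_measure_ratio (lam : ℝ) (hlam : 0 < lam)
    (μ : ℝ → Measure ℝ)
    (hμ : ∀ c, μ c = volume.withDensity
      (fun x => ENNReal.ofReal ((1 / (2 * lam)) * Real.exp (-|x - c| / lam))))
    (a b : ℝ) (S : Set ℝ) (hS : MeasurableSet S) :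
    μ a S ≤ ENNReal.ofReal (Real.exp (|a - b| / lam)) * μ b S := by
  rw [hμ a, hμ b, withDensity_apply _ hS, withDensity_apply _ hS,
    ← lintegral_const_mul' _ _ ENNReal.ofReal_ne_top]
  refine setLIntegral_mono' hS fun x _ => ?_
  rw [← ENNReal.ofReal_mul (Real.exp_nonneg _)]
  apply ENNReal.ofReal_le_ofReal
  rw [show Real.exp (|a - b| / lam) * (1 / (2 * lam) * Real.exp (-|x - b| / lam))
      = 1 / (2 * lam) * Real.exp (|a - b| / lam + -|x - b| / lam) by
    rw [Real.exp_add]; ring]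
  apply mul_le_mul_of_nonneg_left _ (by positivity)
  apply Real.exp_le_exp.mpr
  rw [← add_div]
  gcongr
  linarith [abs_sub_le x a b]
end

section
/- Let R be a nonempty finite set, ε > 0, Δq > 0, and let q₁, q₂ : R → ℝ satisfy |q₁(r) − q₂(r)| ≤ Δq for every r ∈ R. Then for every r ∈ R, exp(ε·q₁(r)/(2Δq)) / (∑_{r'∈R} exp(ε·q₁(r')/(2Δq))) ≤ exp(ε) · exp(ε·q₂(r)/(2Δq)) / (∑_{r'∈R} exp(ε·q₂(r')/(2Δq))). -/
open Real

/-- The exponential mechanism gives ε-differential privacy: if the utility scores on two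
neighboring databases differ by at most Δq pointwise, then the selection probabilities
differ by a factor of at most exp(ε). -/
theorem exponential_mechanism_dp {R : Type*} (S : Finset R) (hS : S.Nonempty)
    (ε Δq : ℝ) (hε : 0 < ε) (hΔq : 0 < Δq) (q₁ q₂ : R → ℝ)
    (hsens : ∀ r ∈ S, |q₁ r - q₂ r| ≤ Δq) :
    ∀ r ∈ S,
      Real.exp (ε * q₁ r / (2 * Δq)) / (∑ r' ∈ S, Real.exp (ε * q₁ r' / (2 * Δq)))
        ≤ Real.exp ε *
          (Real.exp (ε * q₂ r / (2 * Δq)) / (∑ r' ∈ S, Real.exp (ε * q₂ r' / (2 * Δq)))) := by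
  intro r hr
  have hΔq' : (0:ℝ) < 2 * Δq := by linarith
  have key12 : ∀ x ∈ S, Real.exp (ε * q₁ x / (2 * Δq)) ≤
      Real.exp (ε / 2) * Real.exp (ε * q₂ x / (2 * Δq)) := by
    intro x hx
    rw [← Real.exp_add]
    apply Real.exp_le_exp.2
    have h := (abs_le.1 (hsens x hx)).2
    rw [div_add_div _ _ (by norm_num : (2:ℝ) ≠ 0) (ne_of_gt hΔq'), div_le_div_iff₀ hΔq' (by positivity)]
    nlinarith [mul_le_mul_of_nonneg_left h (le_of_lt hε)]
  have key21 : ∀ x ∈ S, Real.exp (ε * q₂ x / (2 * Δq)) ≤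
      Real.exp (ε / 2) * Real.exp (ε * q₁ x / (2 * Δq)) := by
    intro x hx
    rw [← Real.exp_add]
    apply Real.exp_le_exp.2
    have h := (abs_le.1 (hsens x hx)).1
    rw [div_add_div _ _ (by norm_num : (2:ℝ) ≠ 0) (ne_of_gt hΔq'), div_le_div_iff₀ hΔq' (by positivity)]
    nlinarith [mul_le_mul_of_nonneg_left h (le_of_lt hε)]
  have hS1 : (0:ℝ) < ∑ r' ∈ S, Real.exp (ε * q₁ r' / (2 * Δq)) :=
    Finset.sum_pos (fun x _ => Real.exp_pos _) hS
  have hS2 : (0:ℝ) < ∑ r' ∈ S, Real.exp (ε * q₂ r' / (2 * Δq)) :=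
    Finset.sum_pos (fun x _ => Real.exp_pos _) hS
  rw [mul_div_assoc', div_le_div_iff₀ hS1 hS2]
  have h1 : Real.exp (ε * q₁ r / (2 * Δq)) ≤ Real.exp (ε / 2) * Real.exp (ε * q₂ r / (2 * Δq)) :=
    key12 r hr
  have h2 : (∑ r' ∈ S, Real.exp (ε * q₂ r' / (2 * Δq))) ≤
      Real.exp (ε / 2) * ∑ r' ∈ S, Real.exp (ε * q₁ r' / (2 * Δq)) := by
    rw [Finset.mul_sum]
    exact Finset.sum_le_sum key21
  calc Real.exp (ε * q₁ r / (2 * Δq)) * ∑ r' ∈ S, Real.exp (ε * q₂ r' / (2 * Δq))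
      ≤ (Real.exp (ε / 2) * Real.exp (ε * q₂ r / (2 * Δq))) *
        (Real.exp (ε / 2) * ∑ r' ∈ S, Real.exp (ε * q₁ r' / (2 * Δq))) := by
        apply mul_le_mul h1 h2 (le_of_lt hS2) (by positivity)
    _ = Real.exp ε * Real.exp (ε * q₂ r / (2 * Δq)) *
        ∑ r' ∈ S, Real.exp (ε * q₁ r' / (2 * Δq)) := by
        rw [mul_mul_mul_comm, ← Real.exp_add, add_halves, mul_assoc]
end

section
/- Let I be a nonempty finite index set, and for each i ∈ I let εᵢ ≥ 0 and let fᵢ, gᵢ be nonnegative reals with fᵢ ≤ exp(εᵢ)·gᵢ. Suppose there is at most one index j ∈ I with fⱼ ≠ gⱼ. Then ∏_{i∈I} fᵢ ≤ exp(max_{i∈I} εᵢ) · ∏_{i∈I} gᵢ. -/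
open Real

/-- Parallel composition core: if fᵢ ≤ exp(εᵢ)·gᵢ for nonnegative reals and fᵢ = gᵢ for all
but at most one index, then ∏ᵢ fᵢ ≤ exp(maxᵢ εᵢ)·∏ᵢ gᵢ. -/
theorem parallel_composition {I : Type*} (s : Finset I) (hs : s.Nonempty) (ε f g : I → ℝ)
    (hε : ∀ i ∈ s, 0 ≤ ε i) (hf : ∀ i ∈ s, 0 ≤ f i) (hg : ∀ i ∈ s, 0 ≤ g i)
    (h : ∀ i ∈ s, f i ≤ Real.exp (ε i) * g i)
    (hone : ∀ i ∈ s, ∀ j ∈ s, f i ≠ g i → f j ≠ g j → i = j) :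
    ∏ i ∈ s, f i ≤ Real.exp (s.sup' hs ε) * ∏ i ∈ s, g i := by
  have hsup : 0 ≤ s.sup' hs ε := by
    obtain ⟨i, hi⟩ := hs
    exact le_trans (hε i hi) (Finset.le_sup' ε hi)
  classical
  by_cases hex : ∃ j ∈ s, f j ≠ g j
  · obtain ⟨j, hj, hfj⟩ := hex
    have hgeq : ∀ i ∈ s.erase j, f i = g i := by
      intro i hi
      by_contra hne
      exact (Finset.mem_erase.mp hi).1 (hone i (Finset.mem_erase.mp hi).2 j hj hne hfj)
    have hprodg : 0 ≤ ∏ i ∈ s.erase j, g i :=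
      Finset.prod_nonneg fun i hi => hg i ((Finset.mem_erase.mp hi).2)
    have h1 : f j ≤ Real.exp (s.sup' hs ε) * g j :=
      le_trans (h j hj)
        (mul_le_mul_of_nonneg_right (Real.exp_le_exp.mpr (Finset.le_sup' ε hj)) (hg j hj))
    rw [← Finset.mul_prod_erase s f hj, ← Finset.mul_prod_erase s g hj,
      Finset.prod_congr rfl hgeq, ← mul_assoc]
    exact mul_le_mul_of_nonneg_right h1 hprodg
  · push_neg at hex
    have : ∏ i ∈ s, f i = ∏ i ∈ s, g i := Finset.prod_congr rfl hex
    rw [this]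
    have hprodg : 0 ≤ ∏ i ∈ s, g i := Finset.prod_nonneg hg
    nlinarith [Real.one_le_exp hsup]
end

section
/- Let n ≥ 1 and let c : {1,…,n} → ℝ be a sequence of reals. For 1 ≤ i ≤ j ≤ n define mean[i,j] = (∑_{m=i}^{j} c(m)) / (j − i + 1). Then for every m with 1 ≤ m ≤ n, min_{j ∈ [m,n]} max_{i ∈ [1,j]} mean[i,j] = max_{i ∈ [1,m]} min_{j ∈ [i,n]} mean[i,j]; that is, the sequences L_m = min_{j ∈ [m,n]} max_{i ∈ [1,j]} mean[i,j] and U_m = max_{i ∈ [1,m]} min_{j ∈ [i,n]} mean[i,j] coincide. -/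
open Finset

/-- The mean of the subsequence c(i), …, c(j). -/
noncomputable def seqMean (c : ℕ → ℝ) (i j : ℕ) : ℝ :=
  (∑ m ∈ Finset.Icc i j, c m) / ((j - i + 1 : ℕ) : ℝ)

lemma seqMean_split (c : ℕ → ℝ) {i k j : ℕ} (hik : i ≤ k) (hkj : k < j) :
    ((j - i + 1 : ℕ) : ℝ) * seqMean c i j
      = ((k - i + 1 : ℕ) : ℝ) * seqMean c i k + ((j - k : ℕ) : ℝ) * seqMean c (k+1) j := by
  have e3 : j - (k+1) + 1 = j - k := by omega
  have h1 : ((j - i + 1 : ℕ) : ℝ) ≠ 0 := Nat.cast_ne_zero.mpr (by omega)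
  have h2 : ((k - i + 1 : ℕ) : ℝ) ≠ 0 := Nat.cast_ne_zero.mpr (by omega)
  have h3 : ((j - k : ℕ) : ℝ) ≠ 0 := Nat.cast_ne_zero.mpr (by omega)
  have hsum : (∑ x ∈ Finset.Icc i j, c x)
      = (∑ x ∈ Finset.Icc i k, c x) + (∑ x ∈ Finset.Icc (k+1) j, c x) := by
    rw [← Finset.Ico_add_one_right_eq_Icc i j, ← Finset.Ico_add_one_right_eq_Icc i k, ← Finset.Ico_add_one_right_eq_Icc (k+1) j]
    exact (Finset.sum_Ico_consecutive _ (by omega) (by omega)).symm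
  simp only [seqMean, e3]
  rw [mul_div_cancel₀ _ h1, mul_div_cancel₀ _ h2, mul_div_cancel₀ _ h3]
  exact hsum

section mix
variable {c : ℕ → ℝ} {i k j : ℕ} {t : ℝ}

lemma split_weights (hik : i ≤ k) (hkj : k < j) :
    ∃ w1 w2 : ℝ, 0 < w1 ∧ 0 < w2 ∧
      (w1 + w2) * seqMean c i j = w1 * seqMean c i k + w2 * seqMean c (k+1) j := by
  have hw1 : (0:ℝ) < ((k - i + 1 : ℕ) : ℝ) := by exact_mod_cast (by omega : 0 < k - i + 1)
  have hw2 : (0:ℝ) < ((j - k : ℕ) : ℝ) := by exact_mod_cast (by omega : 0 < j - k)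
  have hWn : (k - i + 1) + (j - k) = j - i + 1 := by omega
  have hW : ((k - i + 1 : ℕ) : ℝ) + ((j - k : ℕ) : ℝ) = ((j - i + 1 : ℕ) : ℝ) := by
    exact_mod_cast congrArg (Nat.cast : ℕ → ℝ) hWn
  exact ⟨_, _, hw1, hw2, by rw [hW]; exact seqMean_split c hik hkj⟩

lemma split_ge (hik : i ≤ k) (hkj : k < j)
    (ha : t ≤ seqMean c i k) (hb : t ≤ seqMean c (k+1) j) : t ≤ seqMean c i j := by
  obtain ⟨w1, w2, h1, h2, hv⟩ := split_weights (c := c) hik hkj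
  nlinarith [mul_le_mul_of_nonneg_left ha h1.le, mul_le_mul_of_nonneg_left hb h2.le]

lemma split_le (hik : i ≤ k) (hkj : k < j)
    (ha : seqMean c i k ≤ t) (hb : seqMean c (k+1) j ≤ t) : seqMean c i j ≤ t := by
  obtain ⟨w1, w2, h1, h2, hv⟩ := split_weights (c := c) hik hkj
  nlinarith [mul_le_mul_of_nonneg_left ha h1.le, mul_le_mul_of_nonneg_left hb h2.le]

lemma split_lt_left (hik : i ≤ k) (hkj : k < j)
    (ha : seqMean c i k < t) (hb : seqMean c (k+1) j ≤ t) : seqMean c i j < t := by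
  obtain ⟨w1, w2, h1, h2, hv⟩ := split_weights (c := c) hik hkj
  nlinarith [mul_lt_mul_of_pos_left ha h1, mul_le_mul_of_nonneg_left hb h2.le]

lemma split_lt_right (hik : i ≤ k) (hkj : k < j)
    (ha : seqMean c i k ≤ t) (hb : seqMean c (k+1) j < t) : seqMean c i j < t := by
  obtain ⟨w1, w2, h1, h2, hv⟩ := split_weights (c := c) hik hkj
  nlinarith [mul_le_mul_of_nonneg_left ha h1.le, mul_lt_mul_of_pos_left hb h2]

lemma split_gt_left (hik : i ≤ k) (hkj : k < j)
    (ha : t < seqMean c i k) (hb : t ≤ seqMean c (k+1) j) : t < seqMean c i j := by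
  obtain ⟨w1, w2, h1, h2, hv⟩ := split_weights (c := c) hik hkj
  nlinarith [mul_lt_mul_of_pos_left ha h1, mul_le_mul_of_nonneg_left hb h2.le]

end mix

/-- L_m = min_{j ∈ [m,n]} max_{i ∈ [1,j]} mean[i,j].  (For 1 ≤ m ≤ n the `min`/`max`
with the index bounds below coincide with the intended ranges.) -/
noncomputable def Lest (c : ℕ → ℝ) (n m : ℕ) : ℝ :=
  (Finset.Icc (min m n) n).inf' (Finset.nonempty_Icc.mpr (min_le_right m n))
    fun j => (Finset.Icc 1 (max j 1)).sup' (Finset.nonempty_Icc.mpr (le_max_right j 1))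
      fun i => seqMean c i j

/-- U_m = max_{i ∈ [1,m]} min_{j ∈ [i,n]} mean[i,j]. -/
noncomputable def Uest (c : ℕ → ℝ) (n m : ℕ) : ℝ :=
  (Finset.Icc 1 (max m 1)).sup' (Finset.nonempty_Icc.mpr (le_max_right m 1))
    fun i => (Finset.Icc (min i n) n).inf' (Finset.nonempty_Icc.mpr (min_le_right i n))
      fun j => seqMean c i j

/-- Theorem 6 (first part): the min-max and max-min estimates coincide,
L_m = U_m for every 1 ≤ m ≤ n. -/
theorem minmax_eq_maxmin (n : ℕ) (hn : 1 ≤ n) (c : ℕ → ℝ) (m : ℕ)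
    (hm1 : 1 ≤ m) (hmn : m ≤ n) :
    Lest c n m = Uest c n m := by
  classical
  set F : ℕ → ℝ := fun j => (Finset.Icc 1 (max j 1)).sup'
      (Finset.nonempty_Icc.mpr (le_max_right j 1)) (fun i => seqMean c i j) with hF
  have hne1 : (Finset.Icc (min m n) n).Nonempty := Finset.nonempty_Icc.mpr (min_le_right m n)
  have hLdef : Lest c n m = (Finset.Icc (min m n) n).inf' hne1 F := rfl
  -- sup bound
  have hsup_le : ∀ i j, 1 ≤ i → i ≤ j → seqMean c i j ≤ F j := by
    intro i j h1 h2
    exact Finset.le_sup' (fun i => seqMean c i j)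
      (Finset.mem_Icc.mpr ⟨h1, le_trans h2 (le_max_left _ _)⟩)
  have hFwit : ∀ j, 1 ≤ j → ∃ i, 1 ≤ i ∧ i ≤ j ∧ F j = seqMean c i j := by
    intro j hj
    obtain ⟨i, hi, hiv⟩ := Finset.exists_mem_eq_sup'
      (Finset.nonempty_Icc.mpr (le_max_right j 1)) (fun i => seqMean c i j)
    rw [Finset.mem_Icc, max_eq_left hj] at hi
    exact ⟨i, hi.1, hi.2, hiv⟩
  -- minimizer j*
  obtain ⟨js, hjs_mem, hjs⟩ := Finset.exists_mem_eq_inf' hne1 F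
  rw [Finset.mem_Icc, min_eq_left hmn] at hjs_mem
  have hFlb : ∀ j, m ≤ j → j ≤ n → F js ≤ F j := by
    intro j h1 h2
    rw [← hjs]
    exact Finset.inf'_le F (by rw [Finset.mem_Icc, min_eq_left hmn]; exact ⟨h1, h2⟩)
  have hjs1 : 1 ≤ js := le_trans hm1 hjs_mem.1
  have hsupjs : ∀ i, 1 ≤ i → i ≤ js → seqMean c i js ≤ F js := fun i a b => hsup_le i js a b
  -- minimal maximizer i*
  have hPex : ∃ i, 1 ≤ i ∧ i ≤ js ∧ seqMean c i js = F js := by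
    obtain ⟨i, h1, h2, h3⟩ := hFwit js hjs1
    exact ⟨i, h1, h2, h3.symm⟩
  obtain ⟨his1, his2, his3⟩ := Nat.find_spec hPex
  set is := Nat.find hPex with hisdef
  have hismin : ∀ i, i < is → ¬(1 ≤ i ∧ i ≤ js ∧ seqMean c i js = F js) :=
    fun i h => Nat.find_min hPex h
  -- Claim 1 : is ≤ m
  have hism : is ≤ m := by
    by_contra h
    push_neg at h
    obtain ⟨i', hi'1, hi'2, hi'3⟩ := hFwit (is - 1) (by omega)
    have hge : F js ≤ seqMean c i' (is - 1) := hi'3 ▸ hFlb (is - 1) (by omega) (by omega)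
    have hb : F js ≤ seqMean c (is - 1 + 1) js := by
      rw [show is - 1 + 1 = is by omega]; exact his3.ge
    have hsp : F js ≤ seqMean c i' js := split_ge hi'2 (by omega) hge hb
    have hle : seqMean c i' js ≤ F js := hsupjs i' hi'1 (by omega)
    exact hismin i' (by omega) ⟨hi'1, by omega, le_antisymm hle hsp⟩
  -- Claim 2 : on [is, js]
  have claim2 : ∀ j, is ≤ j → j ≤ js → F js ≤ seqMean c is j := by
    intro j h1 h2
    rcases eq_or_lt_of_le h2 with rfl | hlt
    · exact his3.ge
    · by_contra hcon
      push_neg at hcon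
      have hb : seqMean c (j+1) js ≤ F js := hsupjs (j+1) (by omega) (by omega)
      have : seqMean c is js < F js := split_lt_left h1 hlt hcon hb
      exact absurd his3 (ne_of_lt this)
  -- Claim 3 : on (js, n]
  have claim3 : ∀ j, js < j → j ≤ n → F js ≤ seqMean c is j := by
    by_contra hC
    push_neg at hC
    have hQex : ∃ j, js < j ∧ j ≤ n ∧ seqMean c is j < F js := by
      obtain ⟨j, h1, h2, h3⟩ := hC
      exact ⟨j, h1, h2, h3⟩
    obtain ⟨hq1, hq2, hq3⟩ := Nat.find_spec hQex
    set j1 := Nat.find hQex with hj1def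
    have hmono : ∀ j, js ≤ j → j < j1 → F js ≤ seqMean c is j := by
      intro j ha hb
      rcases eq_or_lt_of_le ha with rfl | h
      · exact his3.ge
      · by_contra hc
        push_neg at hc
        exact Nat.find_min hQex hb ⟨h, by omega, hc⟩
    have hA : seqMean c (js+1) j1 < F js := by
      by_contra hc
      push_neg at hc
      exact absurd (split_ge (t := F js) his2 hq1 (his3.ge) hc) (not_le.mpr hq3)
    obtain ⟨i1, hi11, hi12, hi13⟩ := hFwit j1 (by omega)
    have hi1ge : F js ≤ seqMean c i1 j1 := hi13 ▸ hFlb j1 (by omega) hq2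
    rcases lt_trichotomy i1 is with hlt | heq | hgt
    · -- i1 < is
      have hgt1 : F js < seqMean c i1 (is - 1) := by
        by_contra hc
        push_neg at hc
        have hb : seqMean c (is - 1 + 1) j1 < F js := by
          rw [show is - 1 + 1 = is by omega]; exact hq3
        have := split_lt_right (show i1 ≤ is - 1 by omega) (show is - 1 < j1 by omega) hc hb
        linarith
      have hb : F js ≤ seqMean c (is - 1 + 1) js := by
        rw [show is - 1 + 1 = is by omega]; exact his3.ge
      have hx : F js < seqMean c i1 js :=
        split_gt_left (show i1 ≤ is - 1 by omega) (show is - 1 < js by omega) hgt1 hb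
      have := hsupjs i1 hi11 (by omega)
      linarith
    · subst heq; linarith
    · rcases le_or_gt i1 js with hle | hgt2
      · have hb := hsupjs i1 (by omega) hle
        have := split_lt_right hle hq1 hb hA
        linarith
      · rcases eq_or_lt_of_le (show js + 1 ≤ i1 by omega) with heq2 | hgt3
        · rw [← heq2] at hi1ge; linarith
        · have hfirst : seqMean c (js+1) (i1-1) < F js := by
            by_contra hc
            push_neg at hc
            have hb : F js ≤ seqMean c (i1 - 1 + 1) j1 := by
              rw [show i1 - 1 + 1 = i1 by omega]; exact hi1ge
            have := split_ge (show js + 1 ≤ i1 - 1 by omega) (show i1 - 1 < j1 by omega) hc hb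
            linarith
          have hx : seqMean c is (i1-1) < F js :=
            split_lt_right his2 (show js < i1 - 1 by omega) (his3.le) hfirst
          have := hmono (i1 - 1) (by omega) (by omega)
          linarith
  -- conclude
  have hLval : Lest c n m = F js := by rw [hLdef, hjs]
  apply le_antisymm
  · -- Lest ≤ Uest
    rw [hLval]
    refine le_trans ?_ (Finset.le_sup'
      (fun i => (Finset.Icc (min i n) n).inf' (Finset.nonempty_Icc.mpr (min_le_right i n))
        fun j => seqMean c i j)
      (show is ∈ Finset.Icc 1 (max m 1) from
        Finset.mem_Icc.mpr ⟨his1, le_trans hism (le_max_left _ _)⟩))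
    apply Finset.le_inf'
    intro j hj
    rw [Finset.mem_Icc, min_eq_left (le_trans his2 hjs_mem.2)] at hj
    rcases le_or_gt j js with h | h
    · exact claim2 j hj.1 h
    · exact claim3 j h hj.2
  · -- Uest ≤ Lest
    apply Finset.sup'_le
    intro i hi
    rw [Finset.mem_Icc, max_eq_left hm1] at hi
    rw [hLdef]
    apply Finset.le_inf'
    intro j hj
    rw [Finset.mem_Icc, min_eq_left hmn] at hj
    have h1 : i ≤ j := le_trans hi.2 hj.1
    refine le_trans (Finset.inf'_le _ ?_) (hsup_le i j hi.1 h1)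
    rw [Finset.mem_Icc, min_eq_left (le_trans hi.2 hmn)]
    exact ⟨h1, hj.2⟩
end

section
/- Let n ≥ 1 and let c : {1,…,n} → ℝ be a sequence of reals. For 1 ≤ i ≤ j ≤ n define mean[i,j] = (∑_{m=i}^{j} c(m)) / (j − i + 1), and for 1 ≤ m ≤ n define L_m = min_{j ∈ [m,n]} max_{i ∈ [1,j]} mean[i,j]. Then L minimizes the squared L2 distance to c among all nondecreasing sequences: for every T : {1,…,n} → ℝ with T_1 ≤ T_2 ≤ ⋯ ≤ T_n, one has ∑_{m=1}^{n} (c(m) − L_m)² ≤ ∑_{m=1}^{n} (c(m) − T_m)². -/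
open Finset

namespace LestAux

noncomputable def Mx (c : ℕ → ℝ) (j : ℕ) : ℝ :=
  (Finset.Icc 1 (max j 1)).sup' (Finset.nonempty_Icc.mpr (le_max_right j 1))
    fun i => seqMean c i j

lemma Lest_eq_inf (c : ℕ → ℝ) (n m : ℕ) :
    Lest c n m = (Finset.Icc (min m n) n).inf'
      (Finset.nonempty_Icc.mpr (min_le_right m n)) (Mx c) := rfl

lemma kpos (i j : ℕ) : (0:ℝ) < ((j - i + 1 : ℕ) : ℝ) := by
  exact_mod_cast Nat.succ_pos (j - i)

lemma mean_le_iff {c : ℕ → ℝ} {i j : ℕ} {t : ℝ} :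
    seqMean c i j ≤ t ↔ ∑ m ∈ Finset.Icc i j, c m ≤ t * ((j - i + 1 : ℕ) : ℝ) := by
  rw [seqMean, div_le_iff₀ (kpos i j)]

lemma le_mean_iff {c : ℕ → ℝ} {i j : ℕ} {t : ℝ} :
    t ≤ seqMean c i j ↔ t * ((j - i + 1 : ℕ) : ℝ) ≤ ∑ m ∈ Finset.Icc i j, c m := by
  rw [seqMean, le_div_iff₀ (kpos i j)]

lemma mean_eq_iff {c : ℕ → ℝ} {i j : ℕ} {t : ℝ} :
    seqMean c i j = t ↔ ∑ m ∈ Finset.Icc i j, c m = t * ((j - i + 1 : ℕ) : ℝ) := by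
  rw [seqMean, div_eq_iff (ne_of_gt (kpos i j))]

lemma mean_le_Mx (c : ℕ → ℝ) {i j : ℕ} (hi : 1 ≤ i) (hij : i ≤ j) :
    seqMean c i j ≤ Mx c j :=
  Finset.le_sup' (fun i => seqMean c i j)
    (Finset.mem_Icc.mpr ⟨hi, le_trans hij (le_max_left j 1)⟩)

lemma Mx_exists (c : ℕ → ℝ) {j : ℕ} (hj : 1 ≤ j) :
    ∃ i, 1 ≤ i ∧ i ≤ j ∧ Mx c j = seqMean c i j := by
  obtain ⟨i, hi, hEq⟩ := Finset.exists_mem_eq_sup' (Finset.nonempty_Icc.mpr (le_max_right j 1))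
    (fun i => seqMean c i j)
  rw [Finset.mem_Icc, max_eq_left hj] at hi
  exact ⟨i, hi.1, hi.2, hEq⟩

lemma Lest_le_Mx (c : ℕ → ℝ) {n m j : ℕ} (hmj : m ≤ j) (hjn : j ≤ n) :
    Lest c n m ≤ Mx c j := by
  rw [Lest_eq_inf]
  exact Finset.inf'_le _ (Finset.mem_Icc.mpr ⟨le_trans (min_le_left m n) hmj, hjn⟩)

lemma le_Lest (c : ℕ → ℝ) {n m : ℕ} {v : ℝ} (hmn : m ≤ n)
    (h : ∀ j, m ≤ j → j ≤ n → v ≤ Mx c j) : v ≤ Lest c n m := by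
  rw [Lest_eq_inf]
  apply Finset.le_inf'
  intro j hj
  rw [Finset.mem_Icc, min_eq_left hmn] at hj
  exact h j hj.1 hj.2

lemma Lest_mono (c : ℕ → ℝ) {n m m' : ℕ} (h1 : m ≤ m') (h2 : m' ≤ n) :
    Lest c n m ≤ Lest c n m' := by
  rw [Lest_eq_inf c n m']
  apply Finset.le_inf'
  intro j hj
  rw [Finset.mem_Icc, min_eq_left h2] at hj
  exact Lest_le_Mx c (le_trans h1 hj.1) hj.2


lemma sum_split (c : ℕ → ℝ) {i k j : ℕ} (hi : 1 ≤ i) (hik : i ≤ k + 1) (hkj : k ≤ j) :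
    ∑ m ∈ Finset.Icc i j, c m
      = ∑ m ∈ Finset.Icc i k, c m + ∑ m ∈ Finset.Icc (k+1) j, c m := by
  rw [← Finset.sum_union]
  · congr 1
    ext x
    simp only [Finset.mem_union, Finset.mem_Icc]
    omega
  · rw [Finset.disjoint_left]
    intro a ha hb
    rw [Finset.mem_Icc] at ha hb
    omega

lemma cast_add_split {a b d : ℕ} (h : a + b = d) :
    ((a : ℝ)) + (b : ℝ) = (d : ℝ) := by exact_mod_cast congrArg (Nat.cast : ℕ → ℝ) h

/-- Within a segment ending at `b` where the max-mean is attained at `i₀` with value `v`,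
all partial sums from `i₀` are at least `v` times the length. -/
lemma seg_sum_ge (c : ℕ → ℝ) {i₀ b : ℕ} {v : ℝ} (hi : 1 ≤ i₀) (hib : i₀ ≤ b)
    (hmax : ∀ i, 1 ≤ i → i ≤ b → seqMean c i b ≤ v)
    (heq : seqMean c i₀ b = v) {k : ℕ} (hk1 : i₀ ≤ k) (hk2 : k ≤ b) :
    v * ((k - i₀ + 1 : ℕ) : ℝ) ≤ ∑ m ∈ Finset.Icc i₀ k, c m := by
  rcases eq_or_lt_of_le hk2 with rfl | hkb
  · exact le_of_eq (mean_eq_iff.mp heq).symm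
  · have hsplit := sum_split c hi (by omega) (le_of_lt hkb) (k := k) (j := b)
    have h2 : ∑ m ∈ Finset.Icc (k+1) b, c m ≤ v * ((b - (k+1) + 1 : ℕ) : ℝ) :=
      mean_le_iff.mp (hmax (k+1) (by omega) (by omega))
    have h1 : ∑ m ∈ Finset.Icc i₀ b, c m = v * ((b - i₀ + 1 : ℕ) : ℝ) :=
      mean_eq_iff.mp heq
    have hcast : ((k - i₀ + 1 : ℕ) : ℝ) + ((b - (k+1) + 1 : ℕ) : ℝ)
        = ((b - i₀ + 1 : ℕ) : ℝ) := cast_add_split (by omega)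
    have h3 : v * (((k - i₀ + 1 : ℕ) : ℝ) + ((b - (k+1) + 1 : ℕ) : ℝ))
        = v * ((b - i₀ + 1 : ℕ) : ℝ) := by rw [hcast]
    rw [mul_add] at h3
    linarith

/-- Means ending just before `i₀` are at most `v`. -/
lemma prev_mean_le (c : ℕ → ℝ) {i₀ b : ℕ} {v : ℝ} (hi : 2 ≤ i₀) (hib : i₀ ≤ b)
    (hmax : ∀ i, 1 ≤ i → i ≤ b → seqMean c i b ≤ v)
    (heq : seqMean c i₀ b = v) {i : ℕ} (hi1 : 1 ≤ i) (hi2 : i ≤ i₀ - 1) :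
    seqMean c i (i₀ - 1) ≤ v := by
  rw [mean_le_iff]
  have hsplit : ∑ m ∈ Finset.Icc i b, c m
      = ∑ m ∈ Finset.Icc i (i₀ - 1), c m + ∑ m ∈ Finset.Icc i₀ b, c m := by
    have := sum_split c hi1 (k := i₀ - 1) (j := b) (by omega) (by omega)
    rwa [show i₀ - 1 + 1 = i₀ by omega] at this
  have h1 : ∑ m ∈ Finset.Icc i b, c m ≤ v * ((b - i + 1 : ℕ) : ℝ) :=
    mean_le_iff.mp (hmax i hi1 (by omega))
  have h2 : ∑ m ∈ Finset.Icc i₀ b, c m = v * ((b - i₀ + 1 : ℕ) : ℝ) := mean_eq_iff.mp heq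
  have hcast : (((i₀ - 1) - i + 1 : ℕ) : ℝ) + ((b - i₀ + 1 : ℕ) : ℝ)
      = ((b - i + 1 : ℕ) : ℝ) := cast_add_split (by omega)
  have h3 : v * ((((i₀ - 1) - i + 1 : ℕ) : ℝ) + ((b - i₀ + 1 : ℕ) : ℝ))
      = v * ((b - i + 1 : ℕ) : ℝ) := by rw [hcast]
  rw [mul_add] at h3
  linarith


def GoodB (c : ℕ → ℝ) (n b : ℕ) : Prop :=
  1 ≤ b ∧ b ≤ n ∧ ∀ j, b ≤ j → j ≤ n → Mx c b ≤ Mx c j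

noncomputable def Pk (c : ℕ → ℝ) (n k : ℕ) : ℝ :=
  ∑ m ∈ Finset.Icc 1 k, (c m - Lest c n m)

def Qb (c : ℕ → ℝ) (n b : ℕ) : Prop :=
  (∀ k, k ≤ b → 0 ≤ Pk c n k) ∧ Pk c n b = 0 ∧
    (∀ k, 1 ≤ k → k < b → Lest c n k < Lest c n (k+1) → Pk c n k = 0)

lemma Pk_zero (c : ℕ → ℝ) (n : ℕ) : Pk c n 0 = 0 := by
  simp [Pk]

lemma Qb_zero (c : ℕ → ℝ) (n : ℕ) : Qb c n 0 := by
  refine ⟨?_, Pk_zero c n, ?_⟩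
  · intro k hk
    interval_cases k
    rw [Pk_zero]
  · intro k hk1 hk0
    omega

lemma good_Q (c : ℕ → ℝ) (n : ℕ) : ∀ b, GoodB c n b → Qb c n b := by
  intro b
  induction b using Nat.strong_induction_on with
  | _ b IH =>
    rintro ⟨hb1, hbn, hM⟩
    set v := Mx c b with hv
    obtain ⟨i₀, hi₀1, hi₀b, hEq⟩ := Mx_exists c hb1
    have hmax : ∀ i, 1 ≤ i → i ≤ b → seqMean c i b ≤ v := fun i h1 h2 => mean_le_Mx c h1 h2
    have hseg : ∀ k, i₀ ≤ k → k ≤ b → v ≤ seqMean c i₀ k := fun k h1 h2 =>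
      le_mean_iff.mpr (seg_sum_ge c hi₀1 hi₀b hmax hEq.symm h1 h2)
    have hMge : ∀ j, i₀ ≤ j → j ≤ n → v ≤ Mx c j := by
      intro j h1 h2
      rcases le_total j b with hjb | hbj
      · exact le_trans (hseg j h1 hjb) (mean_le_Mx c hi₀1 h1)
      · exact hM j hbj h2
    have hLconst : ∀ m, i₀ ≤ m → m ≤ b → Lest c n m = v := by
      intro m h1 h2
      refine le_antisymm (Lest_le_Mx c h2 hbn) (le_Lest c (le_trans h2 hbn) ?_)
      intro j hj1 hj2
      exact hMge j (le_trans h1 hj1) hj2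
    have hQ' : Qb c n (i₀ - 1) := by
      by_cases hc : i₀ = 1
      · rw [hc]
        exact Qb_zero c n
      · have h2i : 2 ≤ i₀ := by omega
        have hgood : GoodB c n (i₀ - 1) := by
          refine ⟨by omega, by omega, ?_⟩
          have hMx' : Mx c (i₀ - 1) ≤ v := by
            apply Finset.sup'_le
            intro i hi
            rw [Finset.mem_Icc, max_eq_left (by omega : 1 ≤ i₀ - 1)] at hi
            exact prev_mean_le c h2i hi₀b hmax hEq.symm hi.1 hi.2
          intro j hj1 hj2
          rcases eq_or_lt_of_le hj1 with h | h
          · rw [← h]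
          · exact le_trans hMx' (hMge j (by omega) hj2)
        exact IH (i₀ - 1) (by omega) hgood
    obtain ⟨hQ1, hQ2, hQ3⟩ := hQ'
    have hPdec : ∀ k, i₀ ≤ k → k ≤ b →
        Pk c n k = Pk c n (i₀ - 1)
          + (∑ m ∈ Finset.Icc i₀ k, c m - v * ((k - i₀ + 1 : ℕ) : ℝ)) := by
      intro k h1 h2
      have hsp := sum_split (fun m => c m - Lest c n m) le_rfl
        (by omega : (1:ℕ) ≤ (i₀ - 1) + 1) (by omega : i₀ - 1 ≤ k)
      rw [show i₀ - 1 + 1 = i₀ by omega] at hsp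
      have hconst : ∑ m ∈ Finset.Icc i₀ k, (c m - Lest c n m)
          = ∑ m ∈ Finset.Icc i₀ k, (c m - v) := by
        apply Finset.sum_congr rfl
        intro m hm
        rw [Finset.mem_Icc] at hm
        rw [hLconst m hm.1 (le_trans hm.2 h2)]
      have hsum : ∑ m ∈ Finset.Icc i₀ k, (c m - v)
          = ∑ m ∈ Finset.Icc i₀ k, c m - v * ((k - i₀ + 1 : ℕ) : ℝ) := by
        rw [Finset.sum_sub_distrib, Finset.sum_const, Nat.card_Icc, nsmul_eq_mul]
        rw [show k + 1 - i₀ = k - i₀ + 1 by omega, mul_comm]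
      rw [Pk, Pk, hsp, hconst, hsum]
    refine ⟨?_, ?_, ?_⟩
    · intro k hk
      rcases le_or_gt k (i₀ - 1) with h | h
      · exact hQ1 k h
      · have h1 : i₀ ≤ k := by omega
        rw [hPdec k h1 hk]
        have hge := seg_sum_ge c hi₀1 hi₀b hmax hEq.symm h1 hk
        have hP0 := hQ1 (i₀ - 1) le_rfl
        linarith
    · rw [hPdec b hi₀b le_rfl, hQ2, mean_eq_iff.mp hEq.symm]
      ring
    · intro k hk1 hkb hjump
      rcases lt_trichotomy k (i₀ - 1) with h | h | h
      · exact hQ3 k hk1 h hjump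
      · rw [h]
        exact hQ2
      · exfalso
        rw [hLconst k (by omega) (by omega), hLconst (k+1) (by omega) (by omega)] at hjump
        exact lt_irrefl _ hjump

lemma Q_main (c : ℕ → ℝ) (n : ℕ) (hn : 1 ≤ n) : Qb c n n := by
  apply good_Q
  refine ⟨hn, le_rfl, ?_⟩
  intro j h1 h2
  rw [le_antisymm h2 h1]


lemma abel (c T : ℕ → ℝ) (n : ℕ) (hn : 1 ≤ n)
    (hT : ∀ i j, 1 ≤ i → i ≤ j → j ≤ n → T i ≤ T j) :
    ∀ N, 1 ≤ N → N ≤ n →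
      ∑ m ∈ Finset.Icc 1 N, (c m - Lest c n m) * (T m - Lest c n m)
        ≤ Pk c n N * (T N - Lest c n N) := by
  intro N hN
  induction N, hN using Nat.le_induction with
  | base =>
    intro _
    have h1 : Pk c n 1 = c 1 - Lest c n 1 := by simp [Pk]
    rw [h1, Finset.Icc_self, Finset.sum_singleton]
  | succ N hN ih =>
    intro hN1
    have hNn : N ≤ n := by omega
    obtain ⟨hQ1, hQ2, hQ3⟩ := Q_main c n hn
    have hrec : Pk c n (N+1) = Pk c n N + (c (N+1) - Lest c n (N+1)) :=
      Finset.sum_Icc_succ_top (by omega) _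
    have hsum : ∑ m ∈ Finset.Icc 1 (N+1), (c m - Lest c n m) * (T m - Lest c n m)
        = (∑ m ∈ Finset.Icc 1 N, (c m - Lest c n m) * (T m - Lest c n m))
          + (c (N+1) - Lest c n (N+1)) * (T (N+1) - Lest c n (N+1)) :=
      Finset.sum_Icc_succ_top (by omega) _
    have key : Pk c n N * (T N - Lest c n N)
        ≤ Pk c n N * (T (N+1) - Lest c n (N+1)) := by
      rcases eq_or_lt_of_le (Lest_mono c (Nat.le_succ N) hN1) with hL | hL
      · have hTle : T N ≤ T (N+1) := hT N (N+1) hN (Nat.le_succ N) hN1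
        rw [← hL]
        exact mul_le_mul_of_nonneg_left (by linarith) (hQ1 N hNn)
      · rw [hQ3 N hN (by omega) hL]
        simp
    have hexp : Pk c n (N+1) * (T (N+1) - Lest c n (N+1))
        = Pk c n N * (T (N+1) - Lest c n (N+1))
          + (c (N+1) - Lest c n (N+1)) * (T (N+1) - Lest c n (N+1)) := by
      rw [hrec]; ring
    rw [hsum, hexp]
    linarith [ih hNn]

end LestAux

/-- The min-max estimates L form the minimum-L2 solution among all nondecreasing
sequences: for every nondecreasing T on {1,…,n},
∑_{m=1}^{n} (c(m) − L_m)² ≤ ∑_{m=1}^{n} (c(m) − T_m)². -/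
theorem Lest_min_L2 (n : ℕ) (hn : 1 ≤ n) (c : ℕ → ℝ) (T : ℕ → ℝ)
    (hT : ∀ i j, 1 ≤ i → i ≤ j → j ≤ n → T i ≤ T j) :
    ∑ m ∈ Finset.Icc 1 n, (c m - Lest c n m) ^ 2
      ≤ ∑ m ∈ Finset.Icc 1 n, (c m - T m) ^ 2 := by
  obtain ⟨hQ1, hQ2, hQ3⟩ := LestAux.Q_main c n hn
  have hinner : ∑ m ∈ Finset.Icc 1 n, (c m - Lest c n m) * (T m - Lest c n m) ≤ 0 := by
    have := LestAux.abel c T n hn hT n hn le_rfl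
    rw [hQ2] at this
    simpa using this
  have hexp : ∑ m ∈ Finset.Icc 1 n, (c m - T m) ^ 2
      = ∑ m ∈ Finset.Icc 1 n, (c m - Lest c n m) ^ 2
        - 2 * ∑ m ∈ Finset.Icc 1 n, (c m - Lest c n m) * (T m - Lest c n m)
        + ∑ m ∈ Finset.Icc 1 n, (T m - Lest c n m) ^ 2 := by
    rw [Finset.mul_sum, ← Finset.sum_sub_distrib, ← Finset.sum_add_distrib]
    apply Finset.sum_congr rfl
    intro m _
    ring
  have hsq : 0 ≤ ∑ m ∈ Finset.Icc 1 n, (T m - Lest c n m) ^ 2 :=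
    Finset.sum_nonneg fun m _ => sq_nonneg _
  linarith
end
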